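/- For every odd integer k ≥ 3, Q(φ², F_{2k−1} − 1) − Q(φ, F_{2k−1} − 1) = 1 − L_{k−2}/(L_{k+1} (L_k)² (F_{k−1})²). -/

import Mathlib

def lucas : ℕ → ℕ
  | 0 => 2
  | 1 => 1
  | n + 2 => lucas (n + 1) + lucas n

noncomputable def Q (α : ℝ) (m : ℕ) : ℝ :=
  (∑ n ∈ Finset.Icc 1 m, (⌊α * n⌋ : ℝ) ^ 3) / (∑ n ∈ Finset.Icc 1 m, (⌊α * n⌋ : ℝ)) ^ 2

noncomputable def φ : ℝ := (1 + Real.sqrt 5) / 2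

namespace QAux

noncomputable def ψ : ℝ := (1 - Real.sqrt 5) / 2

lemma s5_sq : Real.sqrt 5 ^ 2 = 5 := Real.sq_sqrt (by norm_num)
lemma s5_pos : 0 < Real.sqrt 5 := Real.sqrt_pos.mpr (by norm_num)
lemma s5_gt : 2 < Real.sqrt 5 := by nlinarith [s5_sq, s5_pos]
lemma s5_lt : Real.sqrt 5 < 3 := by nlinarith [s5_sq, s5_pos]

lemma phi_def : φ = (1 + Real.sqrt 5) / 2 := rfl
lemma phi_gt_one : 1 < φ := by rw [phi_def]; nlinarith [s5_gt]
lemma phi_pos : 0 < φ := lt_trans one_pos phi_gt_one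
lemma phi_mul_psi : φ * ψ = -1 := by
  rw [phi_def]; unfold ψ; nlinarith [s5_sq]
lemma phi_add_psi : φ + ψ = 1 := by rw [phi_def]; unfold ψ; ring
lemma phi_sub_psi : φ - ψ = Real.sqrt 5 := by rw [phi_def]; unfold ψ; ring
lemma psi_neg : ψ < 0 := by unfold ψ; nlinarith [s5_gt]
lemma psi_gt : -1 < ψ := by unfold ψ; nlinarith [s5_lt]
lemma psi_sq : ψ ^ 2 = ψ + 1 := by unfold ψ; nlinarith [s5_sq]
lemma abs_psi_lt_one : |ψ| < 1 := abs_lt.mpr ⟨psi_gt, psi_neg.trans one_pos⟩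
lemma phi_sq : φ ^ 2 = φ + 1 := by rw [phi_def]; nlinarith [s5_sq]

lemma binet (m : ℕ) : (Nat.fib m : ℝ) * Real.sqrt 5 = φ ^ m - ψ ^ m := by
  induction m using Nat.twoStepInduction with
  | zero => simp
  | one => simpa using phi_sub_psi.symm
  | more n ih1 ih2 =>
    rw [Nat.fib_add_two]
    push_cast
    have h1 : φ ^ (n + 2) = φ ^ n * φ ^ 2 := by ring
    have h2 : ψ ^ (n + 2) = ψ ^ n * ψ ^ 2 := by ring
    have h3 : φ ^ (n + 1) = φ ^ n * φ := by ring
    have h4 : ψ ^ (n + 1) = ψ ^ n * ψ := by ring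
    rw [h1, h2, phi_sq, psi_sq]
    rw [h3, h4] at ih2
    linear_combination ih1 + ih2

lemma phi_fib (m : ℕ) : φ * (Nat.fib m : ℝ) = (Nat.fib (m + 1) : ℝ) - ψ ^ m := by
  have h0 := binet m
  have h1 := binet (m + 1)
  have h2 : φ ^ (m + 1) = φ ^ m * φ := by ring
  have h3 : ψ ^ (m + 1) = ψ ^ m * ψ := by ring
  rw [h2, h3] at h1
  have hne := s5_pos.ne'
  have key : (φ * (Nat.fib m : ℝ) - (Nat.fib (m + 1) : ℝ) + ψ ^ m) * Real.sqrt 5 = 0 := by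
    linear_combination φ * h0 - h1 - ψ ^ m * phi_sub_psi
  have := mul_eq_zero.mp key
  rcases this with h | h
  · linarith
  · exact absurd h hne

lemma int_ne (r n : ℤ) (hn : 0 < n) : r ^ 2 - r * n - n ^ 2 ≠ 0 := by
  intro h
  have hz : (2 * r - n) ^ 2 = 5 * n ^ 2 := by linear_combination 4 * h
  have hirr : Irrational (Real.sqrt 5) := by
    have := (by norm_num : Nat.Prime 5).irrational_sqrt
    simpa using this
  have hn' : (0:ℝ) < (n : ℝ) := by exact_mod_cast hn
  have h1 : ((|2 * r - n| : ℤ) : ℝ) ^ 2 = (Real.sqrt 5 * n) ^ 2 := by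
    rw [mul_pow, s5_sq]
    push_cast [sq_abs]
    have hz' := congrArg (fun z : ℤ => (z : ℝ)) hz
    push_cast at hz'
    linarith
  have h2 : Real.sqrt 5 * (n : ℝ) = ((|2 * r - n| : ℤ) : ℝ) := by
    have ha : (0:ℝ) ≤ ((|2 * r - n| : ℤ) : ℝ) := by positivity
    have hb : (0:ℝ) ≤ Real.sqrt 5 * n := by positivity
    nlinarith [h1, ha, hb]
  exact (Irrational.mul_intCast hirr (by exact_mod_cast hn.ne' : (n:ℤ) ≠ 0)).ne_int _ h2

lemma dio (n : ℕ) (r : ℤ) (hn : 1 ≤ n) (hr : |φ * n - r| ≤ 1) :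
    1 ≤ |φ * n - (r : ℝ)| * (Real.sqrt 5 * n + 1) := by
  have hprod : (φ * n - r) * (ψ * n - r) = ((r ^ 2 - r * n - n ^ 2 : ℤ) : ℝ) := by
    push_cast
    linear_combination ((n:ℝ) ^ 2) * phi_mul_psi - ((n:ℝ) * (r:ℝ)) * phi_add_psi
  have hint : (1:ℝ) ≤ |((r ^ 2 - r * n - n ^ 2 : ℤ) : ℝ)| := by
    have := Int.one_le_abs (int_ne r n (by exact_mod_cast hn))
    exact_mod_cast this
  rw [← hprod, abs_mul] at hint
  have hs : |ψ * n - (r:ℝ)| ≤ Real.sqrt 5 * n + 1 := by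
    have he : ψ * n - (r:ℝ) = (φ * n - r) - Real.sqrt 5 * n := by
      rw [← phi_sub_psi]; ring
    rw [he]
    have h1 : |(φ * n - (r:ℝ)) - Real.sqrt 5 * n| ≤ |φ * n - (r:ℝ)| + |Real.sqrt 5 * n| :=
      abs_sub _ _
    have h2 : |Real.sqrt 5 * (n:ℝ)| = Real.sqrt 5 * n := abs_of_nonneg (by positivity)
    linarith
  nlinarith [abs_nonneg (φ * n - (r:ℝ)), abs_nonneg (ψ * n - (r:ℝ))]

lemma big (m n : ℕ) (hm : 2 ≤ m) (hn : n + 1 ≤ Nat.fib m) :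
    Real.sqrt 5 * n + 1 < φ ^ m := by
  have hcast : (n : ℝ) + 1 ≤ (Nat.fib m : ℝ) := by exact_mod_cast hn
  have hb := binet m
  have habs : |ψ ^ m| ≤ ψ ^ 2 := by
    rw [abs_pow, ← sq_abs]
    exact pow_le_pow_of_le_one (abs_nonneg _) abs_psi_lt_one.le hm
  have h1 := abs_le.mp habs
  have hn0 : (0:ℝ) ≤ (n:ℝ) := Nat.cast_nonneg n
  have hpsi2 : 2 * ψ = 1 - Real.sqrt 5 := by unfold ψ; ring
  linarith [s5_gt, psi_sq, h1.1, mul_le_mul_of_nonneg_left hcast s5_pos.le, hb]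

lemma phi_pow_psi_even (m : ℕ) (h : Even m) : φ ^ m * ψ ^ m = 1 := by
  rw [← mul_pow, phi_mul_psi]; exact h.neg_one_pow

lemma phi_pow_psi_odd (m : ℕ) (h : Odd m) : φ ^ m * ψ ^ m = -1 := by
  rw [← mul_pow, phi_mul_psi]; exact h.neg_one_pow

lemma floor_shift (m n : ℕ) (hm : 2 ≤ m) (h1 : 1 ≤ n) (h2 : n + 1 ≤ Nat.fib m) :
    ⌊φ * ((n : ℝ) + (Nat.fib m : ℝ))⌋ = ⌊φ * n⌋ + (Nat.fib (m + 1) : ℤ) := by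
  have hkey : φ * ((n : ℝ) + (Nat.fib m : ℝ)) = φ * n + (Nat.fib (m+1) : ℝ) - ψ ^ m := by
    linear_combination phi_fib m
  set a : ℤ := ⌊φ * (n:ℝ)⌋ with ha
  have hfl1 : (a : ℝ) ≤ φ * n := Int.floor_le _
  have hfl2 : φ * n < a + 1 := Int.lt_floor_add_one _
  have hbig := big m n hm h2
  have hphipow : (0:ℝ) < φ ^ m := pow_pos phi_pos m
  rw [hkey, Int.floor_eq_iff]
  push_cast
  rcases Nat.even_or_odd m with he | ho
  · -- ψ^m = 1/φ^m > 0
    have hps := phi_pow_psi_even m he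
    have hpsipos : (0:ℝ) < ψ ^ m := by
      by_contra hcon
      push_neg at hcon
      nlinarith
    constructor
    · -- a + fib(m+1) ≤ φn + fib(m+1) - ψ^m  ⟺  ψ^m ≤ φn - a
      have hd := dio n a h1 (by rw [abs_of_nonneg (by linarith)]; linarith)
      rw [abs_of_nonneg (by linarith)] at hd
      nlinarith
    · nlinarith
  · have hps := phi_pow_psi_odd m ho
    have hpsineg : ψ ^ m < 0 := by
      by_contra hcon
      push_neg at hcon
      nlinarith
    constructor
    · nlinarith
    · -- φn + fib(m+1) - ψ^m < a + fib(m+1) + 1 ⟺ φn - ψ^m < a+1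
      have hd := dio n (a + 1) h1 (by
        rw [abs_of_nonpos (by push_cast; linarith)]
        push_cast; linarith)
      rw [abs_of_nonpos (by push_cast; linarith)] at hd
      push_cast at hd
      nlinarith
lemma psi_pow_lt_one (m : ℕ) (hm : 1 ≤ m) : |ψ ^ m| < 1 := by
  rw [abs_pow]
  exact pow_lt_one₀ (abs_nonneg _) abs_psi_lt_one (by omega)

lemma psi_pow_ne (m : ℕ) : ψ ^ m ≠ 0 := pow_ne_zero m psi_neg.ne

lemma floor_fib_even (m : ℕ) (hm : 1 ≤ m) (he : Even m) :
    ⌊φ * (Nat.fib m : ℝ)⌋ = (Nat.fib (m + 1) : ℤ) - 1 := by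
  rw [phi_fib m, Int.floor_eq_iff]
  have h1 := psi_pow_lt_one m hm
  have hps := phi_pow_psi_even m he
  have hphipow : (0:ℝ) < φ ^ m := pow_pos phi_pos m
  have hpsipos : (0:ℝ) < ψ ^ m := by nlinarith [psi_pow_ne m, abs_nonneg (ψ ^ m), abs_le.mp h1.le]
  rw [abs_of_pos hpsipos] at h1
  push_cast
  constructor <;> linarith

lemma floor_fib_odd (m : ℕ) (hm : 1 ≤ m) (ho : Odd m) :
    ⌊φ * (Nat.fib m : ℝ)⌋ = (Nat.fib (m + 1) : ℤ) := by
  rw [phi_fib m, Int.floor_eq_iff]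
  have h1 := psi_pow_lt_one m hm
  have hps := phi_pow_psi_odd m ho
  have hphipow : (0:ℝ) < φ ^ m := pow_pos phi_pos m
  have hpsineg : ψ ^ m < 0 := by nlinarith [abs_le.mp h1.le]
  rw [abs_of_neg hpsineg] at h1
  push_cast
  constructor <;> linarith

lemma floor_phi_sq (n : ℕ) : ⌊φ ^ 2 * (n : ℝ)⌋ = ⌊φ * n⌋ + (n : ℤ) := by
  have h : φ ^ 2 * (n : ℝ) = φ * n + ((n : ℤ) : ℝ) := by
    push_cast
    linear_combination (n : ℝ) * phi_sq
  rw [h, Int.floor_add_intCast]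

lemma cassini (j : ℕ) :
    ((Nat.fib (j + 1) : ℤ)) ^ 2 - (Nat.fib j : ℤ) * (Nat.fib (j + 2) : ℤ) = (-1) ^ j := by
  induction j with
  | zero => simp
  | succ n ih =>
    have h1 : (Nat.fib (n + 2) : ℤ) = Nat.fib n + Nat.fib (n + 1) := by
      exact_mod_cast (Nat.fib_add_two (n := n))
    have h2 : (Nat.fib (n + 3) : ℤ) = Nat.fib (n + 1) + Nat.fib (n + 2) := by
      exact_mod_cast (Nat.fib_add_two (n := n + 1))
    rw [pow_succ]
    simp only [show n+1+1 = n+2 from rfl, show n+1+2 = n+3 from rfl]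
    linear_combination (-(Nat.fib (n+1):ℤ)) * h2 + ((Nat.fib (n+2):ℤ)) * h1 - ih

lemma lucas_fib (n : ℕ) : lucas (n + 1) = Nat.fib n + Nat.fib (n + 2) := by
  induction n using Nat.twoStepInduction with
  | zero => rfl
  | one => rfl
  | more n ih1 ih2 =>
    have hdef : lucas (n + 2 + 1) = lucas (n + 2) + lucas (n + 1) := rfl
    rw [hdef, ih1]
    have hih2 : lucas (n + 2) = Nat.fib (n + 1) + Nat.fib (n + 1 + 2) := ih2
    rw [hih2, Nat.fib_add_two (n := n + 2), Nat.fib_add_two (n := n)]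
    simp only [show n+1+2 = n+3 from rfl, show n+2+2 = n+4 from rfl]
    have h4 : Nat.fib (n + 4) = Nat.fib (n + 2) + Nat.fib (n + 3) := Nat.fib_add_two
    omega
noncomputable def Sf (p j : ℕ) : ℝ :=
  ∑ n ∈ Finset.Ico 1 (Nat.fib j), ((⌊φ * (n : ℝ)⌋ : ℝ)) ^ p

noncomputable def Sg (p j : ℕ) : ℝ :=
  ∑ n ∈ Finset.Ico 1 (Nat.fib j), ((⌊φ ^ 2 * (n : ℝ)⌋ : ℝ)) ^ p

noncomputable def pT1 (x y e : ℝ) : ℝ := (1 - x - y + x*y)/2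
noncomputable def pT2 (x y e : ℝ) : ℝ :=
  -1/2 + (5/6)*y + (1/6)*e*y - (1/2)*y^2 + (1/3)*x - (1/6)*e*x - (1/2)*x*y + (1/3)*x*y^2
noncomputable def pT3 (x y e : ℝ) : ℝ :=
  1/2 - (5/4)*y - (1/4)*e*y + (5/4)*y^2 + (1/4)*e*y^2 - (1/2)*y^3 - (1/4)*x + (1/4)*e*x
    + (1/2)*x*y - (1/4)*e*x*y - (1/2)*x*y^2 + (1/4)*x*y^3
noncomputable def pV1 (x y e : ℝ) : ℝ := 1/2 - e/2 - y/2 + y^2/2 - x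
noncomputable def pV2 (x y e : ℝ) : ℝ :=
  -1/2 + e + y - (1/3)*e*y - (3/2)*y^2 + (1/3)*y^3 + (4/3)*x - (1/6)*e*x - (1/2)*x*y + (1/3)*x*y^2
noncomputable def pV3 (x y e : ℝ) : ℝ :=
  1/2 - 2*e - (3/2)*y + (3/2)*e*y + (7/2)*y^2 - (1/2)*e*y^2 - 2*y^3 + (1/2)*y^4 - (7/4)*x
    + (3/4)*e*x + (3/2)*x*y - (1/4)*e*x*y - (3/2)*x*y^2 + (1/4)*x*y^3

def P (j : ℕ) : Prop :=
  Sf 1 j = pT1 (Nat.fib j) (Nat.fib (j+1)) ((-1)^j) ∧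
  Sf 2 j = pT2 (Nat.fib j) (Nat.fib (j+1)) ((-1)^j) ∧
  Sf 3 j = pT3 (Nat.fib j) (Nat.fib (j+1)) ((-1)^j) ∧
  Sg 1 j = pV1 (Nat.fib j) (Nat.fib (j+1)) ((-1)^j) ∧
  Sg 2 j = pV2 (Nat.fib j) (Nat.fib (j+1)) ((-1)^j) ∧
  Sg 3 j = pV3 (Nat.fib j) (Nat.fib (j+1)) ((-1)^j)

lemma sum_split (j : ℕ) (hj : 1 ≤ j) (g : ℕ → ℝ) :
    ∑ n ∈ Finset.Ico 1 (Nat.fib (j+2)), g n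
      = (∑ n ∈ Finset.Ico 1 (Nat.fib (j+1)), g n) + g (Nat.fib (j+1))
        + ∑ n ∈ Finset.Ico 1 (Nat.fib j), g (n + Nat.fib (j+1)) := by
  have hf2 : Nat.fib (j+2) = Nat.fib j + Nat.fib (j+1) := Nat.fib_add_two
  have hj0 : 0 < Nat.fib j := Nat.fib_pos.mpr (by omega)
  have hj1 : 0 < Nat.fib (j+1) := Nat.fib_pos.mpr (by omega)
  have h1 : (1:ℕ) ≤ Nat.fib (j+1) := hj1
  have h2 : Nat.fib (j+1) ≤ Nat.fib (j+2) := by omega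
  rw [← Finset.sum_Ico_consecutive g h1 h2]
  have h3 : Nat.fib (j+1) < Nat.fib (j+2) := by omega
  rw [Finset.sum_eq_sum_Ico_succ_bot h3 g]
  have h4 : ∑ n ∈ Finset.Ico (Nat.fib (j+1) + 1) (Nat.fib (j+2)), g n
      = ∑ n ∈ Finset.Ico 1 (Nat.fib j), g (n + Nat.fib (j+1)) := by
    rw [Finset.sum_Ico_eq_sum_range, Finset.sum_Ico_eq_sum_range]
    have h5 : Nat.fib (j+2) - (Nat.fib (j+1) + 1) = Nat.fib j - 1 := by omega
    rw [h5]
    exact Finset.sum_congr rfl fun i _ => by congr 1; omega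
  rw [h4]
  ring

lemma shift_sum_phi (p j : ℕ) (hj : 1 ≤ j) :
    ∑ n ∈ Finset.Ico 1 (Nat.fib j), ((⌊φ * ((n + Nat.fib (j+1) : ℕ) : ℝ)⌋ : ℝ)) ^ p
      = ∑ n ∈ Finset.Ico 1 (Nat.fib j), ((⌊φ * (n:ℝ)⌋ : ℝ) + (Nat.fib (j+2) : ℝ)) ^ p := by
  refine Finset.sum_congr rfl fun n hn => ?_
  obtain ⟨h1, h2⟩ := Finset.mem_Ico.mp hn
  have hle : n + 1 ≤ Nat.fib (j+1) := le_trans h2 (Nat.fib_mono (by omega))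
  have h := floor_shift (j+1) n (by omega) h1 hle
  push_cast [h]
  ring

lemma shift_sum_phi2 (p j : ℕ) (hj : 1 ≤ j) :
    ∑ n ∈ Finset.Ico 1 (Nat.fib j), ((⌊φ ^ 2 * ((n + Nat.fib (j+1) : ℕ) : ℝ)⌋ : ℝ)) ^ p
      = ∑ n ∈ Finset.Ico 1 (Nat.fib j), ((⌊φ ^ 2 * (n:ℝ)⌋ : ℝ) + (Nat.fib (j+3) : ℝ)) ^ p := by
  refine Finset.sum_congr rfl fun n hn => ?_
  obtain ⟨h1, h2⟩ := Finset.mem_Ico.mp hn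
  have hle : n + 1 ≤ Nat.fib (j+1) := le_trans h2 (Nat.fib_mono (by omega))
  have h := floor_shift (j+1) n (by omega) h1 hle
  have hb1 := floor_phi_sq (n + Nat.fib (j+1))
  have hb2 := floor_phi_sq n
  have hf3 : Nat.fib (j+3) = Nat.fib (j+1) + Nat.fib (j+2) := Nat.fib_add_two
  have hfl : ⌊φ ^ 2 * ((n + Nat.fib (j+1) : ℕ) : ℝ)⌋
      = ⌊φ ^ 2 * (n:ℝ)⌋ + (Nat.fib (j+3) : ℤ) := by
    rw [hb1, hb2]
    push_cast at h ⊢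
    rw [h]
    push_cast [hf3, Nat.fib_add_two (n := j)]
    ring
  rw [hfl]
  push_cast
  ring

lemma expand1 (s : Finset ℕ) (g : ℕ → ℝ) (c : ℝ) :
    ∑ n ∈ s, (g n + c) ^ 1 = (∑ n ∈ s, g n ^ 1) + (s.card : ℝ) * c := by
  simp only [pow_one]
  rw [Finset.sum_add_distrib, Finset.sum_const, nsmul_eq_mul]

lemma expand2 (s : Finset ℕ) (g : ℕ → ℝ) (c : ℝ) :
    ∑ n ∈ s, (g n + c) ^ 2
      = (∑ n ∈ s, g n ^ 2) + 2*c*(∑ n ∈ s, g n ^ 1) + (s.card : ℝ) * c^2 := by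
  have h : ∀ n ∈ s, (g n + c)^2 = g n^2 + 2*c*(g n ^ 1) + c^2 := fun n _ => by ring
  rw [Finset.sum_congr rfl h, Finset.sum_add_distrib, Finset.sum_add_distrib,
    ← Finset.mul_sum, Finset.sum_const, nsmul_eq_mul]

lemma expand3 (s : Finset ℕ) (g : ℕ → ℝ) (c : ℝ) :
    ∑ n ∈ s, (g n + c) ^ 3
      = (∑ n ∈ s, g n ^ 3) + 3*c*(∑ n ∈ s, g n ^ 2) + 3*c^2*(∑ n ∈ s, g n ^ 1)
        + (s.card : ℝ) * c^3 := by
  have h : ∀ n ∈ s, (g n + c)^3 = g n^3 + 3*c*(g n ^ 2) + 3*c^2*(g n ^ 1) + c^3 :=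
    fun n _ => by ring
  rw [Finset.sum_congr rfl h, Finset.sum_add_distrib, Finset.sum_add_distrib,
    Finset.sum_add_distrib, ← Finset.mul_sum, ← Finset.mul_sum, Finset.sum_const, nsmul_eq_mul]
lemma Sf_rec (p j : ℕ) (hj : 1 ≤ j) :
    Sf p (j+2) = Sf p (j+1) + ((⌊φ * ((Nat.fib (j+1) : ℕ) : ℝ)⌋ : ℝ)) ^ p
      + ∑ n ∈ Finset.Ico 1 (Nat.fib j), ((⌊φ * (n:ℝ)⌋ : ℝ) + (Nat.fib (j+2) : ℝ)) ^ p := by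
  unfold Sf
  rw [← shift_sum_phi p j hj]
  exact sum_split j hj _

lemma Sg_rec (p j : ℕ) (hj : 1 ≤ j) :
    Sg p (j+2) = Sg p (j+1) + ((⌊φ ^ 2 * ((Nat.fib (j+1) : ℕ) : ℝ)⌋ : ℝ)) ^ p
      + ∑ n ∈ Finset.Ico 1 (Nat.fib j), ((⌊φ ^ 2 * (n:ℝ)⌋ : ℝ) + (Nat.fib (j+3) : ℝ)) ^ p := by
  unfold Sg
  rw [← shift_sum_phi2 p j hj]
  exact sum_split j hj _

lemma step (j : ℕ) (hj : 1 ≤ j) (H0 : P j) (H1 : P (j+1)) : P (j+2) := by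
  obtain ⟨t1, t2, t3, v1, v2, v3⟩ := H0
  obtain ⟨u1, u2, u3, w1, w2, w3⟩ := H1
  simp only [show j+1+1 = j+2 from rfl] at u1 u2 u3 w1 w2 w3
  have hfj : 1 ≤ Nat.fib j := Nat.fib_pos.mpr (by omega)
  have hzn : Nat.fib (j+2) = Nat.fib j + Nat.fib (j+1) := Nat.fib_add_two
  have hwn : Nat.fib (j+3) = Nat.fib (j+1) + Nat.fib (j+2) := Nat.fib_add_two
  have hz : (Nat.fib (j+2) : ℝ) = (Nat.fib j : ℝ) + (Nat.fib (j+1) : ℝ) := by exact_mod_cast hzn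
  have hw : (Nat.fib (j+3) : ℝ) = (Nat.fib (j+1) : ℝ) + (Nat.fib (j+2) : ℝ) := by
    exact_mod_cast hwn
  have hcard : (((Finset.Ico 1 (Nat.fib j)).card : ℕ) : ℝ) = (Nat.fib j : ℝ) - 1 := by
    rw [Nat.card_Ico, Nat.cast_sub hfj, Nat.cast_one]
  have hE1 : ((-1 : ℝ)) ^ (j+1) = -((-1:ℝ)^j) := by rw [pow_succ]; ring
  have hE2 : ((-1 : ℝ)) ^ (j+2) = ((-1:ℝ)^j) := by rw [pow_succ, pow_succ]; ring
  have hE : ((-1 : ℝ)^j) * ((-1:ℝ)^j) = 1 := by rw [← mul_pow]; norm_num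
  have hCr : ((Nat.fib (j+1)) : ℝ)^2
      - (Nat.fib j : ℝ)*((Nat.fib j : ℝ) + (Nat.fib (j+1) : ℝ)) = (-1:ℝ)^j := by
    have h := cassini j
    have h' : ((Nat.fib (j+1)) : ℝ)^2 - (Nat.fib j : ℝ)*(Nat.fib (j+2) : ℝ) = (-1:ℝ)^j := by
      exact_mod_cast h
    rw [hz] at h'
    exact h'
  have hbnd : ((⌊φ * ((Nat.fib (j+1) : ℕ) : ℝ)⌋ : ℝ))
      = (Nat.fib (j+2) : ℝ) - (1 - (-1:ℝ)^j)/2 := by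
    rcases Nat.even_or_odd j with hEv | hOd
    · rw [floor_fib_odd (j+1) (by omega) (Even.add_one hEv), hEv.neg_one_pow]
      push_cast; ring
    · rw [floor_fib_even (j+1) (by omega) (Odd.add_one hOd), hOd.neg_one_pow]
      push_cast; ring
  have hbnd2 : ((⌊φ ^ 2 * ((Nat.fib (j+1) : ℕ) : ℝ)⌋ : ℝ))
      = (Nat.fib (j+2) : ℝ) + (Nat.fib (j+1) : ℝ) - (1 - (-1:ℝ)^j)/2 := by
    rw [floor_phi_sq (Nat.fib (j+1))]
    push_cast
    push_cast at hbnd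
    rw [hbnd]
    ring
  have t1' : (∑ n ∈ Finset.Ico 1 (Nat.fib j), ((⌊φ * (n:ℝ)⌋ : ℝ)) ^ 1)
      = pT1 (Nat.fib j) (Nat.fib (j+1)) ((-1)^j) := t1
  have t2' : (∑ n ∈ Finset.Ico 1 (Nat.fib j), ((⌊φ * (n:ℝ)⌋ : ℝ)) ^ 2)
      = pT2 (Nat.fib j) (Nat.fib (j+1)) ((-1)^j) := t2
  have t3' : (∑ n ∈ Finset.Ico 1 (Nat.fib j), ((⌊φ * (n:ℝ)⌋ : ℝ)) ^ 3)
      = pT3 (Nat.fib j) (Nat.fib (j+1)) ((-1)^j) := t3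
  have v1' : (∑ n ∈ Finset.Ico 1 (Nat.fib j), ((⌊φ ^ 2 * (n:ℝ)⌋ : ℝ)) ^ 1)
      = pV1 (Nat.fib j) (Nat.fib (j+1)) ((-1)^j) := v1
  have v2' : (∑ n ∈ Finset.Ico 1 (Nat.fib j), ((⌊φ ^ 2 * (n:ℝ)⌋ : ℝ)) ^ 2)
      = pV2 (Nat.fib j) (Nat.fib (j+1)) ((-1)^j) := v2
  have v3' : (∑ n ∈ Finset.Ico 1 (Nat.fib j), ((⌊φ ^ 2 * (n:ℝ)⌋ : ℝ)) ^ 3)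
      = pV3 (Nat.fib j) (Nat.fib (j+1)) ((-1)^j) := v3
  refine ⟨?_, ?_, ?_, ?_, ?_, ?_⟩ <;>
    simp only [show j+2+1 = j+3 from rfl]
  · rw [Sf_rec 1 j hj, u1, hbnd, expand1, hcard, t1']
    simp only [pT1]
    rw [hw, hz]; try simp only [hE1, hE2]
    linear_combination (-1/2 : ℝ) * hCr
  · rw [Sf_rec 2 j hj, u2, hbnd, expand2, hcard, t1', t2']
    simp only [pT1, pT2]
    rw [hw, hz]; try simp only [hE1, hE2]
    linear_combination ((1:ℝ)/2 - (Nat.fib (j+1):ℝ) - (2/3)*(Nat.fib j:ℝ)) * hCr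
      + (1/4 : ℝ) * hE
  · rw [Sf_rec 3 j hj, u3, hbnd, expand3, hcard, t1', t2', t3']
    simp only [pT1, pT2, pT3]
    rw [hw, hz]; try simp only [hE1, hE2]
    linear_combination ((-1:ℝ)/2 + (3/2)*(Nat.fib (j+1):ℝ) - (7/4)*(Nat.fib (j+1):ℝ)^2
        + (Nat.fib j:ℝ) - (9/4)*(Nat.fib j:ℝ)*(Nat.fib (j+1):ℝ) - (3/4)*(Nat.fib j:ℝ)^2) * hCr
      + ((3:ℝ)/4*(Nat.fib j:ℝ) + (3/4)*(Nat.fib (j+1):ℝ) + (1/8)*((-1:ℝ)^j) - 3/8) * hE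
  · rw [Sg_rec 1 j hj, w1, hbnd2, expand1, hcard, v1']
    simp only [pV1]
    rw [hw, hz]; try simp only [hE1, hE2]
    linear_combination (-1 : ℝ) * hCr
  · rw [Sg_rec 2 j hj, w2, hbnd2, expand2, hcard, v1', v2']
    simp only [pV1, pV2]
    rw [hw, hz]; try simp only [hE1, hE2]
    linear_combination ((3:ℝ)/2 - (Nat.fib (j+1):ℝ) - (2/3)*(Nat.fib j:ℝ)) * hCr
      + (1/4 : ℝ) * hE
  · rw [Sg_rec 3 j hj, w3, hbnd2, expand3, hcard, v1', v2', v3']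
    simp only [pV1, pV2, pV3]
    rw [hw, hz]; try simp only [hE1, hE2]
    linear_combination ((-5:ℝ)/2 + (3/2)*(Nat.fib (j+1):ℝ) - (3/4)*(Nat.fib (j+1):ℝ)^2
        + (3/2)*(Nat.fib j:ℝ) - (7/4)*(Nat.fib j:ℝ)*(Nat.fib (j+1):ℝ) - (3/4)*(Nat.fib j:ℝ)^2) * hCr
      + ((3:ℝ)/4*(Nat.fib j:ℝ) + (3/2)*(Nat.fib (j+1):ℝ) + (1/8)*((-1:ℝ)^j) - 3/8) * hE
lemma T1ne (a b : ℝ) (ha1 : 1 ≤ a) (hb1 : 1 ≤ b) :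
    ((1 - (a^2+b^2) - (2*a*b+b^2) + (a^2+b^2)*(2*a*b+b^2))/2 : ℝ) ≠ 0 := by
  have hab1 : (1:ℝ) ≤ a*b := by nlinarith
  have hprod : (0:ℝ) < (a^2+b^2-1)*(2*a*b+b^2-1) := by
    apply mul_pos <;> nlinarith
  have h : (0:ℝ) < (1 - (a^2+b^2) - (2*a*b+b^2) + (a^2+b^2)*(2*a*b+b^2))/2 := by
    nlinarith [hprod]
  exact ne_of_gt h

lemma V1ne (a b : ℝ) (ha1 : 1 ≤ a) (hb1 : 1 ≤ b) (hab : a ≤ b) :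
    ((1/2 - (-1:ℝ)/2 - (2*a*b+b^2)/2 + (2*a*b+b^2)^2/2 - (a^2+b^2)) : ℝ) ≠ 0 := by
  have hab1 : (1:ℝ) ≤ a*b := by nlinarith
  have hy3 : (3:ℝ) ≤ 2*a*b+b^2 := by nlinarith
  have hyy : 3*(2*a*b+b^2) ≤ (2*a*b+b^2)^2 := by
    nlinarith [mul_nonneg (by linarith : (0:ℝ) ≤ 2*a*b+b^2) (by linarith : (0:ℝ) ≤ 2*a*b+b^2 - 3)]
  have h4 : (0:ℝ) ≤ a*(b-a) := mul_nonneg (by linarith) (by linarith)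
  have hxy : a^2+b^2 ≤ 2*a*b+b^2 - 1 := by nlinarith
  have h : (0:ℝ) < 1/2 - (-1:ℝ)/2 - (2*a*b+b^2)/2 + (2*a*b+b^2)^2/2 - (a^2+b^2) := by
    nlinarith [hyy, hxy]
  exact ne_of_gt h

lemma base1 : P 1 := by
  unfold P Sf Sg
  norm_num [pT1, pT2, pT3, pV1, pV2, pV3, show Nat.fib 1 = 1 from rfl,
    show Nat.fib 2 = 1 from rfl]

lemma base2 : P 2 := by
  unfold P Sf Sg
  norm_num [pT1, pT2, pT3, pV1, pV2, pV3, show Nat.fib 2 = 1 from rfl,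
    show Nat.fib 3 = 2 from rfl]

lemma CL (j : ℕ) : P (j + 1) := by
  have key : ∀ n, P (n+1) ∧ P (n+2) := by
    intro n
    induction n with
    | zero => exact ⟨base1, base2⟩
    | succ m ih => exact ⟨ih.2, step (m+1) (by omega) ih.1 ih.2⟩
  exact (key j).1

end QAux

set_option maxHeartbeats 2000000 in
theorem Q_diff_odd_index_odd_k (k : ℕ) (hk : 3 ≤ k) (hko : Odd k) :
    Q (φ ^ 2) (Nat.fib (2 * k - 1) - 1) - Q φ (Nat.fib (2 * k - 1) - 1) =
      1 - (lucas (k - 2) : ℝ) /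
        ((lucas (k + 1) : ℝ) * (lucas k : ℝ) ^ 2 * (Nat.fib (k - 1) : ℝ) ^ 2) := by
  open QAux in
  obtain ⟨s, rfl⟩ : ∃ s, k = s + 3 := ⟨k - 3, by omega⟩
  obtain ⟨m, hm⟩ : ∃ m, s = 2 * m := by
    rcases hko with ⟨t, ht⟩; exact ⟨t - 1, by omega⟩
  have hJ : 2 * (s + 3) - 1 = 2*s + 5 := by omega
  have hk2 : s + 3 - 2 = s + 1 := by omega
  have hk1 : s + 3 - 1 = s + 2 := by omega
  rw [hJ, hk2, hk1, show s+3+1 = s+4 from rfl]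
  -- sums
  have hfpos : 0 < Nat.fib (2*s+5) := Nat.fib_pos.mpr (by omega)
  have hIcc : Finset.Icc 1 (Nat.fib (2*s+5) - 1) = Finset.Ico 1 (Nat.fib (2*s+5)) := by
    rw [← Finset.Ico_add_one_right_eq_Icc]
    congr 1
    omega
  have hQ1 : Q φ (Nat.fib (2*s+5) - 1) = Sf 3 (2*s+5) / (Sf 1 (2*s+5))^2 := by
    unfold Q Sf; rw [hIcc]; simp only [pow_one]
  have hQ2 : Q (φ^2) (Nat.fib (2*s+5) - 1) = Sg 3 (2*s+5) / (Sg 1 (2*s+5))^2 := by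
    unfold Q Sg; rw [hIcc]; simp only [pow_one]
  have hP := CL (2*s+4)
  obtain ⟨T1e, _, T3e, V1e, _, V3e⟩ := hP
  simp only [show 2*s+4+1 = 2*s+5 from rfl, show 2*s+5+1 = 2*s+6 from rfl] at T1e T3e V1e V3e
  set a : ℝ := (Nat.fib (s+2) : ℝ) with ha
  set b : ℝ := (Nat.fib (s+3) : ℝ) with hb
  -- fib identities
  have hxn := Nat.fib_two_mul_add_one (s+2)
  rw [show 2*(s+2)+1 = 2*s+5 from by omega, show s+2+1 = s+3 from rfl] at hxn
  have hx : (Nat.fib (2*s+5) : ℝ) = a^2 + b^2 := by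
    rw [ha, hb]; push_cast [hxn]; ring
  have hAn := Nat.fib_two_mul_add_one (s+3)
  rw [show 2*(s+3)+1 = 2*s+7 from by omega, show s+3+1 = s+4 from rfl] at hAn
  have hA : (Nat.fib (2*s+7) : ℝ) = (Nat.fib (s+4) : ℝ)^2 + b^2 := by
    rw [hb]; push_cast [hAn]; ring
  have hB : (Nat.fib (2*s+7) : ℝ) = (Nat.fib (2*s+5) : ℝ) + (Nat.fib (2*s+6) : ℝ) := by
    have h := Nat.fib_add_two (n := 2*s+5)
    simp only [show 2*s+5+2 = 2*s+7 from rfl, show 2*s+5+1 = 2*s+6 from rfl] at h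
    exact_mod_cast h
  have hC4 : (Nat.fib (s+4) : ℝ) = a + b := by
    have h := Nat.fib_add_two (n := s+2)
    simp only [show s+2+2 = s+4 from rfl, show s+2+1 = s+3 from rfl] at h
    rw [ha, hb]; exact_mod_cast h
  rw [hC4] at hA
  have hy : (Nat.fib (2*s+6) : ℝ) = 2*a*b + b^2 := by
    linear_combination hA - hB - hx
  have he : ((-1 : ℝ)) ^ (2*s+5) = -1 := Odd.neg_one_pow ⟨s+2, by ring⟩
  -- cassini
  have hCas : b^2 - a*(a + b) = 1 := by
    have h := cassini (s+2)
    rw [show s+2+1 = s+3 from rfl, show s+2+2 = s+4 from rfl] at h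
    have hev : ((-1 : ℤ)) ^ (s+2) = 1 := Even.neg_one_pow ⟨m+1, by omega⟩
    rw [hev] at h
    have h' : b^2 - a * (Nat.fib (s+4) : ℝ) = 1 := by
      rw [ha, hb]; exact_mod_cast h
    rw [hC4] at h'
    exact h'
  -- lucas values
  have c0 : (Nat.fib s : ℝ) + (Nat.fib (s+1) : ℝ) = a := by
    rw [ha]; exact_mod_cast (Nat.fib_add_two (n := s)).symm
  have c1 : (Nat.fib (s+1) : ℝ) + a = b := by
    have h := Nat.fib_add_two (n := s+1)
    simp only [show s+1+2 = s+3 from rfl, show s+1+1 = s+2 from rfl] at h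
    rw [ha, hb]; exact_mod_cast h.symm
  have c5 : (Nat.fib (s+5) : ℝ) = b + (Nat.fib (s+4) : ℝ) := by
    have h := Nat.fib_add_two (n := s+3)
    simp only [show s+3+2 = s+5 from rfl, show s+3+1 = s+4 from rfl] at h
    rw [hb]; exact_mod_cast h
  have hL2 : (lucas (s+1) : ℝ) = 3*a - b := by
    have l : (lucas (s+1) : ℝ) = (Nat.fib s : ℝ) + (Nat.fib (s+2) : ℝ) := by
      exact_mod_cast lucas_fib s
    rw [← ha] at l
    linarith [l, c0, c1]
  have hLk : (lucas (s+3) : ℝ) = 2*a + b := by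
    have l : (lucas (s+3) : ℝ) = (Nat.fib (s+2) : ℝ) + (Nat.fib (s+4) : ℝ) := by
      exact_mod_cast lucas_fib (s+2)
    rw [← ha, hC4] at l
    linarith
  have hL1 : (lucas (s+4) : ℝ) = a + 3*b := by
    have l : (lucas (s+4) : ℝ) = (Nat.fib (s+3) : ℝ) + (Nat.fib (s+5) : ℝ) := by
      exact_mod_cast lucas_fib (s+3)
    rw [← hb, c5, hC4] at l
    linarith
  -- positivity
  have ha1 : 1 ≤ a := by
    rw [ha]; exact_mod_cast Nat.fib_pos.mpr (by omega)
  have hb1 : 1 ≤ b := by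
    rw [hb]; exact_mod_cast Nat.fib_pos.mpr (by omega)
  have hab : a ≤ b := by
    rw [ha, hb]; exact_mod_cast Nat.fib_mono (by omega)
  rw [hQ1, hQ2, T3e, T1e, V3e, V1e]
  simp only [pT1, pT3, pV1, pV3]
  rw [hx, hy, he, hL2, hLk, hL1]
  have hT1ne := QAux.T1ne a b ha1 hb1
  have hV1ne := QAux.V1ne a b ha1 hb1 hab
  have hDne : ((a + 3*b) * (2*a + b)^2 * a^2 : ℝ) ≠ 0 := by positivity
  rw [div_sub_div _ _ (pow_ne_zero 2 hV1ne) (pow_ne_zero 2 hT1ne), one_sub_div hDne,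
    div_eq_div_iff (by exact mul_ne_zero (pow_ne_zero 2 hV1ne) (pow_ne_zero 2 hT1ne)) hDne]
  linear_combination ((1/4:ℝ)*b^1 + (-3/2:ℝ)*b^3 + (61/16:ℝ)*b^5 + (-85/16:ℝ)*b^7 + (35/8:ℝ)*b^9 + (-17/8:ℝ)*b^11 + (9/16:ℝ)*b^13 + (-1/16:ℝ)*b^15 + (-3/4:ℝ)*a^1 + (11/4:ℝ)*a^1*b^2 + (-31/16:ℝ)*a^1*b^4 + (-43/8:ℝ)*a^1*b^6 + (97/8:ℝ)*a^1*b^8 + (-41/4:ℝ)*a^1*b^10 + (65/16:ℝ)*a^1*b^12 + (-5/8:ℝ)*a^1*b^14 + (4:ℝ)*a^2*b^1 + (-129/8:ℝ)*a^2*b^3 + (21:ℝ)*a^2*b^5 + (-51/16:ℝ)*a^2*b^7 + (-237/16:ℝ)*a^2*b^9 + (45/4:ℝ)*a^2*b^11 + (-11/8:ℝ)*a^2*b^13 + (-15/16:ℝ)*a^2*b^15 + (3/16:ℝ)*a^2*b^17 + (15/4:ℝ)*a^3 + (-207/8:ℝ)*a^3*b^2 + (975/16:ℝ)*a^3*b^4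 + (-835/16:ℝ)*a^3*b^6 + (-9/4:ℝ)*a^3*b^8 + (147/8:ℝ)*a^3*b^10 + (89/16:ℝ)*a^3*b^12 + (-173/16:ℝ)*a^3*b^14 + (5/2:ℝ)*a^3*b^16 + (-83/4:ℝ)*a^4*b^1 + (705/8:ℝ)*a^4*b^3 + (-1751/16:ℝ)*a^4*b^5 + (31/16:ℝ)*a^4*b^7 + (433/8:ℝ)*a^4*b^9 + (43/2:ℝ)*a^4*b^11 + (-791/16:ℝ)*a^4*b^13 + (223/16:ℝ)*a^4*b^15 + (-31/4:ℝ)*a^5 + (145/2:ℝ)*a^5*b^2 + (-2185/16:ℝ)*a^5*b^4 + (-603/16:ℝ)*a^5*b^6 + (443/2:ℝ)*a^5*b^8 + (-213/4:ℝ)*a^5*b^10 + (-1643/16:ℝ)*a^5*b^12 + (655/16:ℝ)*a^5*b^14 + (38:ℝ)*a^6*b^1 + (-1051/8:ℝ)*a^6*b^3 + (-565/8:ℝ)*a^6*b^5 + (543:ℝ)*a^6*b^7 + (-1711/4:ℝ)*a^6*b^9 + (-257/8:ℝ)*a^6*b^11 + (495/8:ℝ)*a^6*b^13 + (33/4:ℝ)*a^7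 + (-731/8:ℝ)*a^7*b^2 + (-79/16:ℝ)*a^7*b^4 + (5879/8:ℝ)*a^7*b^6 + (-2075/2:ℝ)*a^7*b^8 + (661/2:ℝ)*a^7*b^10 + (307/16:ℝ)*a^7*b^12 + (-35:ℝ)*a^8*b^1 + (599/8:ℝ)*a^8*b^3 + (533:ℝ)*a^8*b^5 + (-1350:ℝ)*a^8*b^7 + (1709/2:ℝ)*a^8*b^9 + (-875/8:ℝ)*a^8*b^11 + (-9/2:ℝ)*a^9 + (62:ℝ)*a^9*b^2 + (329/2:ℝ)*a^9*b^4 + (-4223/4:ℝ)*a^9*b^6 + (1118:ℝ)*a^9*b^8 + (-1017/4:ℝ)*a^9*b^10 + (35/2:ℝ)*a^10*b^1 + (-23:ℝ)*a^10*b^3 + (-490:ℝ)*a^10*b^5 + (914:ℝ)*a^10*b^7 + (-655/2:ℝ)*a^10*b^9 + (1:ℝ)*a^11 + (-24:ℝ)*a^11*b^2 + (-98:ℝ)*a^11*b^4 + (472:ℝ)*a^11*b^6 + (-295:ℝ)*a^11*b^8 + (-4:ℝ)*a^12*b^1 + (8:ℝ)*a^12*b^3 + (136:ℝ)*a^12*b^5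 + (-178:ℝ)*a^12*b^7 + (4:ℝ)*a^13*b^2 + (16:ℝ)*a^13*b^4 + (-60:ℝ)*a^13*b^6 + (-8:ℝ)*a^14*b^5) * hCas
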